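/- Let η = η_x + η_y : F₂ → ℤ, where x ∈ {a, a⁻¹} and y ∈ {b, b⁻¹}. Then for every letter-thin triple (x₁,x₂,x₃): η(x₁) + η(x₂) + η(x₃) ∈ {−1, +1}; in particular |η(x₁) + η(x₂) + η(x₃)| = 1. -/

import Mathlib

open FreeGroup

abbrev W : Type := FreeGroup (Fin 2)

/-- The set of alternating words: reduced words whose letters alternate
between the two generators `a` (index 0) and `b` (index 1). -/
def Alt : Set W := {w | List.Chain' (fun p q : Fin 2 × Bool => p.1 ≠ q.1) w.toWord}

/-- The automorphism `φ_a : a ↦ a⁻¹, b ↦ b` of `F₂`. -/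
def phiaF : W →* W :=
  FreeGroup.lift (fun i : Fin 2 => if i = 0 then (FreeGroup.of (0 : Fin 2))⁻¹ else FreeGroup.of 1)

/-- The automorphism `φ_b : a ↦ a, b ↦ b⁻¹` of `F₂`. -/
def phibF : W →* W :=
  FreeGroup.lift (fun i : Fin 2 => if i = 0 then FreeGroup.of 0 else (FreeGroup.of (1 : Fin 2))⁻¹)

/-- Generating moves for the equivalence relation `∼` on triples:
rotation, inversion, and the sign-change automorphisms `φ_a`, `φ_b`. -/
def TripleBase : W × W × W → W × W × W → Prop := fun t t' =>
  t' = (t.2.1, t.2.2, t.1) ∨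
  t' = ((t.2.2)⁻¹, (t.2.1)⁻¹, (t.1)⁻¹) ∨
  t' = (phiaF t.1, phiaF t.2.1, phiaF t.2.2) ∨
  t' = (phibF t.1, phibF t.2.1, phibF t.2.2)

/-- The equivalence relation `∼` on triples of elements of `F₂`. -/
def TripleEquiv : W × W × W → W × W × W → Prop := Relation.EqvGen TripleBase

/-- Form [T1a]: `(c₁⁻¹ a b c₂, c₂⁻¹ b⁻¹ a c₃, c₃⁻¹ a⁻¹ c₁)`, all words reduced. -/
def FormT1a (y₁ y₂ y₃ : W) : Prop :=
  ∃ c₁ c₂ c₃ : W, c₁ ∈ Alt ∧ c₂ ∈ Alt ∧ c₃ ∈ Alt ∧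
    y₁.toWord = (c₁⁻¹).toWord ++ [((0 : Fin 2), true), ((1 : Fin 2), true)] ++ c₂.toWord ∧
    y₂.toWord = (c₂⁻¹).toWord ++ [((1 : Fin 2), false), ((0 : Fin 2), true)] ++ c₃.toWord ∧
    y₃.toWord = (c₃⁻¹).toWord ++ [((0 : Fin 2), false)] ++ c₁.toWord

/-- Form [T1b]: `(c₁⁻¹ b a c₂, c₂⁻¹ a⁻¹ b c₃, c₃⁻¹ b⁻¹ c₁)`, all words reduced. -/
def FormT1b (y₁ y₂ y₃ : W) : Prop :=
  ∃ c₁ c₂ c₃ : W, c₁ ∈ Alt ∧ c₂ ∈ Alt ∧ c₃ ∈ Alt ∧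
    y₁.toWord = (c₁⁻¹).toWord ++ [((1 : Fin 2), true), ((0 : Fin 2), true)] ++ c₂.toWord ∧
    y₂.toWord = (c₂⁻¹).toWord ++ [((0 : Fin 2), false), ((1 : Fin 2), true)] ++ c₃.toWord ∧
    y₃.toWord = (c₃⁻¹).toWord ++ [((1 : Fin 2), false)] ++ c₁.toWord

/-- Form [T2a]: `(c₁⁻¹ b⁻¹ a b c₂, c₂⁻¹ b⁻¹, b c₁)`, all words reduced. -/
def FormT2a (y₁ y₂ y₃ : W) : Prop :=
  ∃ c₁ c₂ : W, c₁ ∈ Alt ∧ c₂ ∈ Alt ∧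
    y₁.toWord = (c₁⁻¹).toWord ++
      [((1 : Fin 2), false), ((0 : Fin 2), true), ((1 : Fin 2), true)] ++ c₂.toWord ∧
    y₂.toWord = (c₂⁻¹).toWord ++ [((1 : Fin 2), false)] ∧
    y₃.toWord = [((1 : Fin 2), true)] ++ c₁.toWord

/-- Form [T2b]: `(c₁⁻¹ a⁻¹ b a c₂, c₂⁻¹ a⁻¹, a c₁)`, all words reduced. -/
def FormT2b (y₁ y₂ y₃ : W) : Prop :=
  ∃ c₁ c₂ : W, c₁ ∈ Alt ∧ c₂ ∈ Alt ∧
    y₁.toWord = (c₁⁻¹).toWord ++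
      [((0 : Fin 2), false), ((1 : Fin 2), true), ((0 : Fin 2), true)] ++ c₂.toWord ∧
    y₂.toWord = (c₂⁻¹).toWord ++ [((0 : Fin 2), false)] ∧
    y₃.toWord = [((0 : Fin 2), true)] ++ c₁.toWord

/-- A triple of alternating words is letter-thin if it is `∼`-equivalent to a triple
of one of the forms [T1a], [T1b], [T2a], [T2b]. -/
def LetterThin (x₁ x₂ x₃ : W) : Prop :=
  x₁ ∈ Alt ∧ x₂ ∈ Alt ∧ x₃ ∈ Alt ∧
  ∃ y₁ y₂ y₃ : W, TripleEquiv (x₁, x₂, x₃) (y₁, y₂, y₃) ∧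
    (FormT1a y₁ y₂ y₃ ∨ FormT1b y₁ y₂ y₃ ∨ FormT2a y₁ y₂ y₃ ∨ FormT2b y₁ y₂ y₃)

/-- The homomorphism `η_x : F₂ → ℤ` counting occurrences of the letter `x = (i,s)`
minus occurrences of its inverse in a reduced word. -/
def etaLetter (i : Fin 2) (s : Bool) (g : W) : ℤ :=
  (g.toWord.count (i, s) : ℤ) - (g.toWord.count (i, !s) : ℤ)


/-! ### Auxiliary machinery -/

/-- Count-difference on raw words. -/
def etaL (i : Fin 2) (s : Bool) (L : List (Fin 2 × Bool)) : ℤ :=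
  (L.count (i, s) : ℤ) - (L.count (i, !s) : ℤ)

lemma etaLetter_eq_etaL (i : Fin 2) (s : Bool) (g : W) :
    etaLetter i s g = etaL i s g.toWord := rfl

lemma etaL_append (i : Fin 2) (s : Bool) (L₁ L₂ : List (Fin 2 × Bool)) :
    etaL i s (L₁ ++ L₂) = etaL i s L₁ + etaL i s L₂ := by
  simp [etaL, List.count_append]; ring

lemma etaL_invRev (i : Fin 2) (s : Bool) (L : List (Fin 2 × Bool)) :
    etaL i s (FreeGroup.invRev L) = - etaL i s L := by
  have key : ∀ (u : Bool) (L : List (Fin 2 × Bool)),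
      List.count (i, u) (FreeGroup.invRev L) = List.count (i, !u) L := by
    intro u L
    rw [FreeGroup.invRev, List.count_reverse]
    induction L with
    | nil => simp
    | cons p L ih =>
      rcases p with ⟨j, v⟩
      rw [List.map_cons, List.count_cons, List.count_cons, ih]
      congr 1
      cases u <;> cases v <;> simp
  unfold etaL
  rw [key s L, key (!s) L, Bool.not_not]
  ring

lemma etaLetter_inv (i : Fin 2) (s : Bool) (g : W) :
    etaLetter i s g⁻¹ = - etaLetter i s g := by
  rw [etaLetter_eq_etaL, FreeGroup.toWord_inv, etaL_invRev, etaLetter_eq_etaL]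

/-- The exponent-sum homomorphism for generator `i`. -/
def eps (i : Fin 2) : W →* Multiplicative ℤ :=
  FreeGroup.lift fun j => Multiplicative.ofAdd (if j = i then (1 : ℤ) else 0)

def E (i : Fin 2) (g : W) : ℤ := Multiplicative.toAdd (eps i g)

lemma E_mul (i : Fin 2) (g h : W) : E i (g * h) = E i g + E i h := by
  simp [E, map_mul]

lemma E_inv (i : Fin 2) (g : W) : E i g⁻¹ = - E i g := by
  simp [E, map_inv]

lemma E_of (i j : Fin 2) : E i (FreeGroup.of j) = if j = i then 1 else 0 := by
  simp [E, eps, FreeGroup.lift_apply_of]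

lemma E_mk (i : Fin 2) (L : List (Fin 2 × Bool)) :
    E i (FreeGroup.mk L) =
      (L.map fun p => if p.1 = i then (bif p.2 then (1 : ℤ) else -1) else 0).sum := by
  induction L with
  | nil => simp [E, eps, FreeGroup.one_eq_mk]
  | cons p L ih =>
    have : FreeGroup.mk (p :: L) = FreeGroup.mk [p] * FreeGroup.mk L := by
      rw [FreeGroup.mul_mk]; rfl
    rw [this, E_mul, ih]
    have hsingle : E i (FreeGroup.mk [p]) =
        (if p.1 = i then (bif p.2 then (1 : ℤ) else -1) else 0) := by
      rcases p with ⟨j, u⟩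
      cases u
      · have : FreeGroup.mk [((j : Fin 2), false)] = (FreeGroup.of j)⁻¹ := by
          rw [show FreeGroup.of j = FreeGroup.mk [(j, true)] from rfl, FreeGroup.inv_mk]
          rfl
        rw [this, E_inv, E_of]; simp; split <;> simp
      · rw [show FreeGroup.mk [((j : Fin 2), true)] = FreeGroup.of j from rfl, E_of]
        simp
    rw [hsingle]
    simp

lemma etaL_eq_sum (i : Fin 2) (s : Bool) (L : List (Fin 2 × Bool)) :
    etaL i s L =
      (bif s then (1 : ℤ) else -1) *
        (L.map fun p => if p.1 = i then (bif p.2 then (1 : ℤ) else -1) else 0).sum := by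
  induction L with
  | nil => simp [etaL]
  | cons p L ih =>
    rcases p with ⟨j, u⟩
    unfold etaL at ih ⊢
    rw [List.count_cons, List.count_cons, List.map_cons, List.sum_cons]
    push_cast
    by_cases hj : j = i
    · subst hj
      cases s <;> cases u <;> simp_all <;> linarith
    · have hs : ¬ (j = i ∧ u = s) := fun hh => hj hh.1
      have hns : ¬ (j = i ∧ u = !s) := fun hh => hj hh.1
      simp only [beq_iff_eq, Prod.mk.injEq]
      rw [if_neg hs, if_neg hns, if_neg hj]
      simpa using ih

lemma etaLetter_eq_E (i : Fin 2) (s : Bool) (g : W) :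
    etaLetter i s g = (bif s then (1 : ℤ) else -1) * E i g := by
  conv_rhs => rw [← FreeGroup.mk_toWord (x := g)]
  rw [etaLetter_eq_etaL, E_mk, etaL_eq_sum]

lemma phiaF_of (j : Fin 2) :
    phiaF (FreeGroup.of j) =
      if j = 0 then (FreeGroup.of (0 : Fin 2))⁻¹ else FreeGroup.of 1 := by
  simp [phiaF, FreeGroup.lift_apply_of]

lemma phibF_of (j : Fin 2) :
    phibF (FreeGroup.of j) =
      if j = 0 then FreeGroup.of (0 : Fin 2) else (FreeGroup.of (1 : Fin 2))⁻¹ := by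
  simp [phibF, FreeGroup.lift_apply_of]

lemma E_phiaF (i : Fin 2) (g : W) :
    E i (phiaF g) = (if i = 0 then -1 else 1) * E i g := by
  induction g using FreeGroup.induction_on with
  | C1 => simp [E]
  | of j =>
    rw [phiaF_of]
    fin_cases j <;> fin_cases i <;> simp [E_of, E_inv]
  | inv_of j ih =>
    rw [_root_.map_inv, E_inv, E_inv, ih]; ring
  | mul g h ihg ihh =>
    rw [_root_.map_mul, E_mul, E_mul, ihg, ihh]; ring

lemma E_phibF (i : Fin 2) (g : W) :
    E i (phibF g) = (if i = 1 then -1 else 1) * E i g := by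
  induction g using FreeGroup.induction_on with
  | C1 => simp [E]
  | of j =>
    rw [phibF_of]
    fin_cases j <;> fin_cases i <;> simp [E_of, E_inv]
  | inv_of j ih =>
    rw [_root_.map_inv, E_inv, E_inv, ih]; ring
  | mul g h ihg ihh =>
    rw [_root_.map_mul, E_mul, E_mul, ihg, ihh]; ring

lemma etaLetter_phiaF_zero (s : Bool) (g : W) :
    etaLetter 0 s (phiaF g) = etaLetter 0 (!s) g := by
  rw [etaLetter_eq_E, etaLetter_eq_E, E_phiaF]
  cases s <;> simp <;> ring

lemma etaLetter_phiaF_one (t : Bool) (g : W) :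
    etaLetter 1 t (phiaF g) = etaLetter 1 t g := by
  rw [etaLetter_eq_E, etaLetter_eq_E, E_phiaF]
  norm_num

lemma etaLetter_phibF_zero (s : Bool) (g : W) :
    etaLetter 0 s (phibF g) = etaLetter 0 s g := by
  rw [etaLetter_eq_E, etaLetter_eq_E, E_phibF]
  norm_num

lemma etaLetter_phibF_one (t : Bool) (g : W) :
    etaLetter 1 t (phibF g) = etaLetter 1 (!t) g := by
  rw [etaLetter_eq_E, etaLetter_eq_E, E_phibF]
  cases t <;> simp <;> ring

/-- The total `η`-value of a triple. -/
def S (s t : Bool) (p : W × W × W) : ℤ :=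
  (etaLetter 0 s p.1 + etaLetter 1 t p.1) + (etaLetter 0 s p.2.1 + etaLetter 1 t p.2.1) +
    (etaLetter 0 s p.2.2 + etaLetter 1 t p.2.2)

/-- The invariant predicate. -/
def P (p : W × W × W) : Prop := ∀ s t : Bool, S s t p = 1 ∨ S s t p = -1

lemma P_base {p q : W × W × W} (h : TripleBase p q) : P p ↔ P q := by
  rcases h with h | h | h | h <;> subst h
  · constructor <;> intro hp s t <;> have := hp s t <;>
      simp only [S] at this ⊢ <;> omega
  · constructor <;> intro hp s t <;> have := hp s t <;>
      simp only [S, etaLetter_inv] at this ⊢ <;> omega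
  · constructor <;> intro hp s t
    · have := hp (!s) t
      simp only [S, etaLetter_phiaF_zero, etaLetter_phiaF_one] at this ⊢
      omega
    · have := hp (!s) t
      simp only [S, etaLetter_phiaF_zero, etaLetter_phiaF_one, Bool.not_not] at this ⊢
      omega
  · constructor <;> intro hp s t
    · have := hp s (!t)
      simp only [S, etaLetter_phibF_zero, etaLetter_phibF_one] at this ⊢
      omega
    · have := hp s (!t)
      simp only [S, etaLetter_phibF_zero, etaLetter_phibF_one, Bool.not_not] at this ⊢
      omega

lemma P_equiv {p q : W × W × W} (h : TripleEquiv p q) : P p ↔ P q := by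
  induction h with
  | rel _ _ hb => exact P_base hb
  | refl _ => exact Iff.rfl
  | symm _ _ _ ih => exact ih.symm
  | trans _ _ _ _ _ ih1 ih2 => exact ih1.trans ih2

lemma etaL_c_inv (i : Fin 2) (s : Bool) (c : W) :
    etaL i s (c⁻¹).toWord = - etaL i s c.toWord := by
  rw [FreeGroup.toWord_inv, etaL_invRev]

lemma P_T1a {y₁ y₂ y₃ : W} (h : FormT1a y₁ y₂ y₃) : P (y₁, y₂, y₃) := by
  obtain ⟨c₁, c₂, c₃, -, -, -, h1, h2, h3⟩ := h
  intro s t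
  have key : S s t (y₁, y₂, y₃) = (bif s then 1 else -1) := by
    simp only [S, etaLetter_eq_etaL, h1, h2, h3, etaL_append, etaL_c_inv]
    cases s <;> cases t <;>
      simp [etaL, List.count_cons, List.count_nil] <;> ring
  rw [key]; cases s <;> simp

lemma P_T1b {y₁ y₂ y₃ : W} (h : FormT1b y₁ y₂ y₃) : P (y₁, y₂, y₃) := by
  obtain ⟨c₁, c₂, c₃, -, -, -, h1, h2, h3⟩ := h
  intro s t
  have key : S s t (y₁, y₂, y₃) = (bif t then 1 else -1) := by
    simp only [S, etaLetter_eq_etaL, h1, h2, h3, etaL_append, etaL_c_inv]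
    cases s <;> cases t <;>
      simp [etaL, List.count_cons, List.count_nil] <;> ring
  rw [key]; cases t <;> simp

lemma P_T2a {y₁ y₂ y₃ : W} (h : FormT2a y₁ y₂ y₃) : P (y₁, y₂, y₃) := by
  obtain ⟨c₁, c₂, -, -, h1, h2, h3⟩ := h
  intro s t
  have key : S s t (y₁, y₂, y₃) = (bif s then 1 else -1) := by
    simp only [S, etaLetter_eq_etaL, h1, h2, h3, etaL_append, etaL_c_inv]
    cases s <;> cases t <;>
      simp [etaL, List.count_cons, List.count_nil] <;> ring
  rw [key]; cases s <;> simp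

lemma P_T2b {y₁ y₂ y₃ : W} (h : FormT2b y₁ y₂ y₃) : P (y₁, y₂, y₃) := by
  obtain ⟨c₁, c₂, -, -, h1, h2, h3⟩ := h
  intro s t
  have key : S s t (y₁, y₂, y₃) = (bif t then 1 else -1) := by
    simp only [S, etaLetter_eq_etaL, h1, h2, h3, etaL_append, etaL_c_inv]
    cases s <;> cases t <;>
      simp [etaL, List.count_cons, List.count_nil] <;> ring
  rw [key]; cases t <;> simp

/-- **Proposition.** For `η = η_x + η_y` with `x ∈ {a,a⁻¹}`, `y ∈ {b,b⁻¹}` and every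
letter-thin triple `(x₁,x₂,x₃)` we have `η(x₁) + η(x₂) + η(x₃) ∈ {-1,+1}`. -/
theorem etaLetter_letterThin (s t : Bool) (x₁ x₂ x₃ : W) (h : LetterThin x₁ x₂ x₃) :
    (etaLetter 0 s x₁ + etaLetter 1 t x₁) + (etaLetter 0 s x₂ + etaLetter 1 t x₂) +
      (etaLetter 0 s x₃ + etaLetter 1 t x₃) = 1 ∨
    (etaLetter 0 s x₁ + etaLetter 1 t x₁) + (etaLetter 0 s x₂ + etaLetter 1 t x₂) +
      (etaLetter 0 s x₃ + etaLetter 1 t x₃) = -1 := by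
  obtain ⟨-, -, -, y₁, y₂, y₃, heq, hform⟩ := h
  have hPy : P (y₁, y₂, y₃) := by
    rcases hform with h | h | h | h
    · exact P_T1a h
    · exact P_T1b h
    · exact P_T2a h
    · exact P_T2b h
  have hP : P (x₁, x₂, x₃) := (P_equiv heq).mpr hPy
  exact hP s t
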